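/- Let F be an infinite Fort space with particular point b. For D ⊆ F let α_D = ((F∖D)×(F∖D)) ∪ Δ_D. Then K = {U ⊆ F×F : ∃ finite D ⊆ F∖{b}, α_D ⊆ U} is a uniform structure on F whose induced topology is the Fort topology. -/

import Mathlib

open Uniformity


/-- The Fort topology on `F` with particular point `b`: a set is open iff it misses `b`
or has finite complement. -/
def fortTop (F : Type*) (b : F) : TopologicalSpace F where
  IsOpen U := b ∈ U → (Uᶜ : Set F).Finite
  isOpen_univ := fun _ => by simp
  isOpen_inter := fun U V hU hV h => by
    rw [Set.compl_inter]
    exact (hU h.1).union (hV h.2)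
  isOpen_sUnion := fun S hS h => by
    obtain ⟨U, hUS, hbU⟩ := h
    exact (hS U hUS hbU).subset (Set.compl_subset_compl.2 (Set.subset_sUnion_of_mem hUS))

/-- The basic entourage `α_D = ((F∖D) × (F∖D)) ∪ Δ_D` associated to `D ⊆ F`. -/
def fortEntourage (F : Type*) (D : Set F) : Set (F × F) :=
  (Dᶜ ×ˢ Dᶜ) ∪ {p : F × F | p.1 ∈ D ∧ p.1 = p.2}

lemma fortEntourage_anti {F : Type*} {D E : Set F} (h : D ⊆ E) :
    fortEntourage F E ⊆ fortEntourage F D := by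
  rintro ⟨x, y⟩ (⟨hx, hy⟩ | ⟨hx, (heq : x = y)⟩)
  · exact Or.inl ⟨fun hD => hx (h hD), fun hD => hy (h hD)⟩
  · subst heq
    by_cases hxD : x ∈ D
    · exact Or.inr ⟨hxD, rfl⟩
    · exact Or.inl ⟨hxD, hxD⟩

lemma fortEntourage_refl {F : Type*} (D : Set F) (x : F) :
    (x, x) ∈ fortEntourage F D := by
  by_cases hx : x ∈ D
  · exact Or.inr ⟨hx, rfl⟩
  · exact Or.inl ⟨hx, hx⟩

lemma fortEntourage_symm {F : Type*} (D : Set F) {x y : F}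
    (h : (x, y) ∈ fortEntourage F D) : (y, x) ∈ fortEntourage F D := by
  rcases h with ⟨hx, hy⟩ | ⟨hx, (heq : x = y)⟩
  · exact Or.inl ⟨hy, hx⟩
  · subst heq
    exact Or.inr ⟨hx, rfl⟩

lemma fortEntourage_comp {F : Type*} (D : Set F) :
    SetRel.comp (fortEntourage F D) (fortEntourage F D) ⊆ fortEntourage F D := by
  rintro ⟨x, z⟩ ⟨y, hxy, hyz⟩
  rcases hxy with ⟨hx, hy⟩ | ⟨hx, (heq : x = y)⟩
  · rcases hyz with ⟨_, hz⟩ | ⟨hy', (heq : y = z)⟩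
    · exact Or.inl ⟨hx, hz⟩
    · exact (hy hy').elim
  · subst heq
    exact hyz

/-- For an infinite Fort space `F` with particular point `b`, the collection
`K = {U ⊆ F×F : ∃ finite D ⊆ F∖{b}, α_D ⊆ U}` is a uniform structure on `F` whose induced
topology is the Fort topology. -/
theorem stmt8 {F : Type*} (b : F) (hF : Infinite F) :
    ∃ u : UniformSpace F,
      u.uniformity.sets =
        {U : Set (F × F) | ∃ D : Set F, D.Finite ∧ b ∉ D ∧ fortEntourage F D ⊆ U} ∧
      u.toTopologicalSpace = fortTop F b := by
  classical
  set f : Filter (F × F) :=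
    { sets := {U : Set (F × F) | ∃ D : Set F, D.Finite ∧ b ∉ D ∧ fortEntourage F D ⊆ U}
      univ_sets := ⟨∅, Set.finite_empty, Set.notMem_empty b, Set.subset_univ _⟩
      sets_of_superset := fun ⟨D, hD, hbD, hsub⟩ hUV => ⟨D, hD, hbD, hsub.trans hUV⟩
      inter_sets := fun ⟨D, hD, hbD, hsubD⟩ ⟨E, hE, hbE, hsubE⟩ =>
        ⟨D ∪ E, hD.union hE, fun h => h.elim hbD hbE,
          Set.subset_inter
            ((fortEntourage_anti Set.subset_union_left).trans hsubD)
            ((fortEntourage_anti Set.subset_union_right).trans hsubE)⟩ } with hf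
  have memf : ∀ {U : Set (F × F)}, U ∈ f ↔
      ∃ D : Set F, D.Finite ∧ b ∉ D ∧ fortEntourage F D ⊆ U := Iff.rfl
  set c : UniformSpace.Core F :=
    UniformSpace.Core.mk' f
      (fun r hr x => by
        obtain ⟨D, _, _, hsub⟩ := memf.mp hr
        exact hsub (fortEntourage_refl D x))
      (fun r hr => by
        obtain ⟨D, hD, hbD, hsub⟩ := memf.mp hr
        exact memf.mpr ⟨D, hD, hbD, fun p hp => hsub (fortEntourage_symm D hp)⟩)
      (fun r hr => by
        obtain ⟨D, hD, hbD, hsub⟩ := memf.mp hr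
        exact ⟨fortEntourage F D, memf.mpr ⟨D, hD, hbD, subset_rfl⟩,
          (fortEntourage_comp D).trans hsub⟩) with hc
  refine ⟨UniformSpace.ofCore c, rfl, ?_⟩
  letI u : UniformSpace F := UniformSpace.ofCore c
  have hU : (uniformity F).sets =
      {U : Set (F × F) | ∃ D : Set F, D.Finite ∧ b ∉ D ∧ fortEntourage F D ⊆ U} := rfl
  refine TopologicalSpace.ext_iff.mpr fun s => ?_
  have hopen : IsOpen s ↔ ∀ x ∈ s, {p : F × F | p.1 = x → p.2 ∈ s} ∈ uniformity F :=
    isOpen_uniformity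
  show IsOpen s ↔ (b ∈ s → (sᶜ : Set F).Finite)
  rw [hopen]
  constructor
  · intro h hbs
    obtain ⟨D, hD, hbD, hsub⟩ := memf.mp (h b hbs)
    refine hD.subset fun y hy => ?_
    by_contra hyD
    have hmem : (b, y) ∈ (Dᶜ ×ˢ Dᶜ : Set (F × F)) := ⟨hbD, hyD⟩
    exact hy (hsub (Set.mem_union_left _ hmem) rfl)
  · intro h x hxs
    by_cases hxb : x = b
    · subst hxb
      refine memf.mpr ⟨sᶜ, h hxs, fun hb => hb hxs, ?_⟩
      rintro ⟨p, q⟩ (⟨hp, hq⟩ | ⟨hp, (heq : p = q)⟩) (rfl : p = x)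
      · exact not_not.mp hq
      · exact (hp hxs).elim
    · refine memf.mpr ⟨{x}, Set.finite_singleton x, fun hb => hxb (Set.mem_singleton_iff.mp hb).symm, ?_⟩
      rintro ⟨p, q⟩ (⟨hp, _⟩ | ⟨_, (heq : p = q)⟩) (rfl : p = x)
      · exact (hp rfl).elim
      · exact heq ▸ hxs
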